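/- Cardinality bound for the auxiliary variable in the strong coordination rate region: Let 𝒳 and 𝒴 be finite alphabets and Q_{XY} a joint pmf on 𝒳×𝒴. For every finite set 𝒰 and every joint pmf P_{UXY} on 𝒰×𝒳×𝒴 whose (X,Y)-marginal equals Q_{XY} and which satisfies the Markov chain X−U−Y, there exist a finite set 𝒰' with |𝒰'| ≤ |𝒳|·|𝒴| + 2 and a joint pmf P_{U'XY} on 𝒰'×𝒳×𝒴 whose (X,Y)-marginal equals Q_{XY}, satisfying the Markov chain X−U'−Y, such that I(X;U') ≤ I(X;U), I(X,Y;U') ≤ I(X,Y;U), and H(Y|U') ≤ H(Y|U). -/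

import Mathlib

open scoped BigOperators

/-- A probability mass function on a finite set: nonnegative, summing to one. -/
def IsPMF {α : Type*} [Fintype α] (p : α → ℝ) : Prop :=
  (∀ a, 0 ≤ p a) ∧ ∑ a, p a = 1

/-- Shannon entropy `H(p) = -∑ p(a) log p(a)` (with `0 log 0 = 0`, since `Real.log 0 = 0`). -/
noncomputable def entropy {α : Type*} [Fintype α] (p : α → ℝ) : ℝ :=
  -∑ a, p a * Real.log (p a)

/-- Mutual information `I(A;B)` of a joint pmf on `α × β`. -/
noncomputable def mutualInfo {α β : Type*} [Fintype α] [Fintype β] (p : α × β → ℝ) : ℝ :=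
  ∑ a, ∑ b, p (a, b) * Real.log (p (a, b) / ((∑ b', p (a, b')) * (∑ a', p (a', b))))

/-- The Markov chain `X − U − Y`: `p(x,u,y)·p(u) = p(x,u)·p(u,y)` for all `(x,u,y)`. -/
def IsMarkov {X U Y : Type*} [Fintype X] [Fintype U] [Fintype Y] (p : X × U × Y → ℝ) : Prop :=
  ∀ x u y, p (x, u, y) * (∑ x', ∑ y', p (x', u, y')) =
    (∑ y', p (x, u, y')) * (∑ x', p (x', u, y))

/-- `I(X;U)` computed from the `(X,U)`-marginal of a joint pmf on `X × U × Y`. -/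
noncomputable def IXU {X U Y : Type*} [Fintype X] [Fintype U] [Fintype Y]
    (p : X × U × Y → ℝ) : ℝ :=
  mutualInfo (fun q : X × U => ∑ y, p (q.1, q.2, y))

/-- `I(X,Y;U)` computed from the `((X,Y),U)`-marginal of a joint pmf on `X × U × Y`. -/
noncomputable def IXYU {X U Y : Type*} [Fintype X] [Fintype U] [Fintype Y]
    (p : X × U × Y → ℝ) : ℝ :=
  mutualInfo (fun q : (X × Y) × U => p (q.1.1, q.2, q.1.2))

/-- Conditional entropy `H(Y|U) = H(U,Y) − H(U)` of a joint pmf on `X × U × Y`. -/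
noncomputable def HYgU {X U Y : Type*} [Fintype X] [Fintype U] [Fintype Y]
    (p : X × U × Y → ℝ) : ℝ :=
  entropy (fun q : U × Y => ∑ x, p (x, q.1, q.2)) -
    entropy (fun u : U => ∑ x, ∑ y, p (x, u, y))


noncomputable def negent {α : Type*} [Fintype α] (f : α → ℝ) : ℝ :=
  ∑ a, f a * Real.log (f a)

lemma log_term1 (w a M : ℝ) (hw : 0 ≤ w) (ha : 0 ≤ a) (hM : w * a ≤ M) :
    w * a * Real.log (w * a / (M * w)) = w * (a * Real.log a) - w * a * Real.log M := by
  rcases eq_or_lt_of_le hw with h | hw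
  · simp [← h]
  rcases eq_or_lt_of_le ha with h | ha
  · simp [← h]
  have hM0 : 0 < M := lt_of_lt_of_le (mul_pos hw ha) hM
  have h1 : w * a / (M * w) = a / M := by
    field_simp
  rw [h1, Real.log_div ha.ne' hM0.ne']
  ring

lemma ablog (a b : ℝ) (ha : 0 ≤ a) (hb : 0 ≤ b) :
    (a * b) * Real.log (a * b) = b * (a * Real.log a) + a * (b * Real.log b) := by
  rcases eq_or_lt_of_le ha with h | ha
  · simp [← h]
  rcases eq_or_lt_of_le hb with h | hb
  · simp [← h]
  rw [Real.log_mul ha.ne' hb.ne']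
  ring

section ProdForm

variable {X Y I : Type*} [Fintype X] [Fintype Y] [Fintype I]
variable (w : I → ℝ) (a : I → X → ℝ) (b : I → Y → ℝ)

lemma sum_prod_pmf {α β : Type*} [Fintype α] [Fintype β] {f : α → ℝ} {g : β → ℝ}
    (hf : ∑ x, f x = 1) (hg : ∑ y, g y = 1) :
    ∑ q : α × β, f q.1 * g q.2 = 1 := by
  rw [Fintype.sum_prod_type]
  have h : ∀ x : α, ∑ y, f x * g y = f x := by
    intro x; rw [← Finset.mul_sum, hg, mul_one]
  simp only [h, hf]

lemma pf_total (hw : ∀ i, 0 ≤ w i) (ha : ∀ i, IsPMF (a i)) (hb : ∀ i, IsPMF (b i)) :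
    ∑ q : X × I × Y, w q.2.1 * (a q.2.1 q.1 * b q.2.1 q.2.2) = ∑ i, w i := by
  rw [Fintype.sum_prod_type]
  have h1 : ∀ (x : X) (i : I), ∑ y, w i * (a i x * b i y) = w i * a i x := by
    intro x i
    rw [← Finset.mul_sum, ← Finset.mul_sum, (hb i).2, mul_one]
  have h : ∀ x : X, (∑ q : I × Y, w q.1 * (a q.1 x * b q.1 q.2)) = ∑ i, w i * a i x := by
    intro x
    rw [Fintype.sum_prod_type]
    exact Finset.sum_congr rfl fun i _ => h1 x i
  simp only [h]
  rw [Finset.sum_comm]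
  apply Finset.sum_congr rfl
  intro i _
  rw [← Finset.mul_sum, (ha i).2, mul_one]

lemma pf_IXU (hw : ∀ i, 0 ≤ w i) (ha : ∀ i, IsPMF (a i)) (hb : ∀ i, IsPMF (b i)) :
    IXU (fun q : X × I × Y => w q.2.1 * (a q.2.1 q.1 * b q.2.1 q.2.2)) =
      ∑ i, w i * negent (a i) - negent (fun x => ∑ i, w i * a i x) := by
  unfold IXU mutualInfo negent
  have h1 : ∀ (x : X) (i : I), (∑ y, w i * (a i x * b i y)) = w i * a i x := by
    intro x i
    rw [← Finset.mul_sum, ← Finset.mul_sum, (hb i).2, mul_one]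
  simp only [h1]
  have h2 : ∀ i : I, (∑ x, w i * a i x) = w i := by
    intro i; rw [← Finset.mul_sum, (ha i).2, mul_one]
  simp only [h2]
  have key : ∀ (x : X) (i : I),
      w i * a i x * Real.log (w i * a i x / ((∑ i', w i' * a i' x) * w i)) =
        w i * (a i x * Real.log (a i x)) - w i * a i x * Real.log (∑ i', w i' * a i' x) := by
    intro x i
    exact log_term1 (w i) (a i x) _ (hw i) ((ha i).1 x)
      (Finset.single_le_sum (fun j _ => mul_nonneg (hw j) ((ha j).1 x)) (Finset.mem_univ i))
  simp only [key, Finset.sum_sub_distrib]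
  congr 1
  · rw [Finset.sum_comm]
    exact Finset.sum_congr rfl fun i _ => (Finset.mul_sum _ _ _).symm
  · apply Finset.sum_congr rfl
    intro x _
    rw [← Finset.sum_mul]


lemma pf_IXYU (hw : ∀ i, 0 ≤ w i) (ha : ∀ i, IsPMF (a i)) (hb : ∀ i, IsPMF (b i)) :
    IXYU (fun q : X × I × Y => w q.2.1 * (a q.2.1 q.1 * b q.2.1 q.2.2)) =
      ∑ i, w i * (negent (a i) + negent (b i)) -
        negent (fun q : X × Y => ∑ i, w i * (a i q.1 * b i q.2)) := by
  unfold IXYU mutualInfo negent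
  have h2 : ∀ i : I, (∑ q : X × Y, w i * (a i q.1 * b i q.2)) = w i := by
    intro i
    rw [Fintype.sum_prod_type]
    have : ∀ x : X, ∑ y, w i * (a i x * b i y) = w i * a i x := by
      intro x; rw [← Finset.mul_sum, ← Finset.mul_sum, (hb i).2, mul_one]
    simp only [this]
    rw [← Finset.mul_sum, (ha i).2, mul_one]
  simp only [h2]
  have key : ∀ (q : X × Y) (i : I),
      w i * (a i q.1 * b i q.2) *
          Real.log (w i * (a i q.1 * b i q.2) / ((∑ i', w i' * (a i' q.1 * b i' q.2)) * w i)) =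
        w i * ((a i q.1 * b i q.2) * Real.log (a i q.1 * b i q.2)) -
          w i * (a i q.1 * b i q.2) * Real.log (∑ i', w i' * (a i' q.1 * b i' q.2)) := by
    intro q i
    exact log_term1 (w i) (a i q.1 * b i q.2) _ (hw i)
      (mul_nonneg ((ha i).1 q.1) ((hb i).1 q.2))
      (Finset.single_le_sum
        (fun j _ => mul_nonneg (hw j) (mul_nonneg ((ha j).1 q.1) ((hb j).1 q.2)))
        (Finset.mem_univ i))
  simp only [key, Finset.sum_sub_distrib]
  congr 1
  · rw [Finset.sum_comm]
    apply Finset.sum_congr rfl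
    intro i _
    rw [← Finset.mul_sum]
    congr 1
    rw [Fintype.sum_prod_type]
    have h3 : ∀ (x : X) (y : Y),
        (a i x * b i y) * Real.log (a i x * b i y) =
          b i y * (a i x * Real.log (a i x)) + a i x * (b i y * Real.log (b i y)) :=
      fun x y => ablog _ _ ((ha i).1 x) ((hb i).1 y)
    simp only [h3, Finset.sum_add_distrib]
    congr 1
    · have : ∀ x : X, ∑ y, b i y * (a i x * Real.log (a i x)) = a i x * Real.log (a i x) := by
        intro x; rw [← Finset.sum_mul, (hb i).2, one_mul]
      simp only [this]
    · have : ∀ x : X, ∑ y, a i x * (b i y * Real.log (b i y)) =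
          a i x * ∑ y, b i y * Real.log (b i y) := by
        intro x; rw [← Finset.mul_sum]
      simp only [this]
      rw [← Finset.sum_mul, (ha i).2, one_mul]
  · apply Finset.sum_congr rfl
    intro q _
    rw [← Finset.sum_mul]

lemma pf_HYgU (hw : ∀ i, 0 ≤ w i) (ha : ∀ i, IsPMF (a i)) (hb : ∀ i, IsPMF (b i)) :
    HYgU (fun q : X × I × Y => w q.2.1 * (a q.2.1 q.1 * b q.2.1 q.2.2)) =
      -∑ i, w i * negent (b i) := by
  unfold HYgU entropy negent
  have h1 : ∀ (i : I) (y : Y), (∑ x, w i * (a i x * b i y)) = w i * b i y := by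
    intro i y
    have : ∀ x : X, w i * (a i x * b i y) = (w i * b i y) * a i x := fun x => by ring
    simp only [this]
    rw [← Finset.mul_sum, (ha i).2, mul_one]
  have h2 : ∀ i : I, (∑ x, ∑ y, w i * (a i x * b i y)) = w i := by
    intro i
    rw [Finset.sum_comm]
    have : ∀ y : Y, (∑ x, w i * (a i x * b i y)) = w i * b i y := h1 i
    simp only [this]
    rw [← Finset.mul_sum, (hb i).2, mul_one]
  simp only [h1, h2]
  have h3 : (∑ q : I × Y, w q.1 * b q.1 q.2 * Real.log (w q.1 * b q.1 q.2)) =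
      ∑ i, (w i * Real.log (w i) + w i * ∑ y, b i y * Real.log (b i y)) := by
    rw [Fintype.sum_prod_type]
    apply Finset.sum_congr rfl
    intro i _
    have h4 : ∀ y : Y, w i * b i y * Real.log (w i * b i y) =
        b i y * (w i * Real.log (w i)) + w i * (b i y * Real.log (b i y)) :=
      fun y => ablog _ _ (hw i) ((hb i).1 y)
    simp only [h4, Finset.sum_add_distrib]
    congr 1
    · rw [← Finset.sum_mul, (hb i).2, one_mul]
    · rw [← Finset.mul_sum]
  rw [h3, Finset.sum_add_distrib]
  ring_nf

lemma pf_markov (hw : ∀ i, 0 ≤ w i) (ha : ∀ i, IsPMF (a i)) (hb : ∀ i, IsPMF (b i)) :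
    IsMarkov (fun q : X × I × Y => w q.2.1 * (a q.2.1 q.1 * b q.2.1 q.2.2)) := by
  intro x i y
  have hxy : (∑ x', ∑ y', w i * (a i x' * b i y')) = w i := by
    have : ∀ x' : X, ∑ y', w i * (a i x' * b i y') = w i * a i x' := by
      intro x'; rw [← Finset.mul_sum, ← Finset.mul_sum, (hb i).2, mul_one]
    simp only [this]
    rw [← Finset.mul_sum, (ha i).2, mul_one]
  have hy : (∑ y', w i * (a i x * b i y')) = w i * a i x := by
    rw [← Finset.mul_sum, ← Finset.mul_sum, (hb i).2, mul_one]
  have hx : (∑ x', w i * (a i x' * b i y)) = w i * b i y := by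
    have : ∀ x' : X, w i * (a i x' * b i y) = (w i * b i y) * a i x' := fun x' => by ring
    simp only [this]
    rw [← Finset.mul_sum, (ha i).2, mul_one]
  simp only [hxy, hy, hx]
  ring

end ProdForm


noncomputable def Lsum (V : Type*) [Fintype V] : ((V → ℝ) × ℝ × ℝ) →ₗ[ℝ] ℝ where
  toFun e := ∑ q, e.1 q
  map_add' e f := by simp [Finset.sum_add_distrib]
  map_smul' c e := by simp [Finset.mul_sum]

lemma card_bound {V : Type*} [Fintype V] [Nonempty V]
    {ι : Type*} [Fintype ι] (z : ι → (V → ℝ) × ℝ × ℝ)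
    (hz : ∀ i, ∑ q, (z i).1 q = 1) (hai : AffineIndependent ℝ z) :
    Fintype.card ι ≤ Fintype.card V + 2 := by
  rcases isEmpty_or_nonempty ι with h | h
  · rw [Fintype.card_eq_zero]; omega
  obtain ⟨i0⟩ := h
  haveI : DecidableEq ι := Classical.decEq ι
  have hVne : (Fintype.card V : ℝ) ≠ 0 := by
    exact_mod_cast Fintype.card_ne_zero
  have hsurj : Function.Surjective (Lsum V) := by
    intro r
    refine ⟨((fun _ => r / Fintype.card V), 0, 0), ?_⟩
    show (∑ _q : V, r / Fintype.card V) = r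
    rw [Finset.sum_const, Finset.card_univ, nsmul_eq_mul]
    field_simp
  have hrange : LinearMap.range (Lsum V) = ⊤ := LinearMap.range_eq_top.mpr hsurj
  have hEfin : Module.finrank ℝ ((V → ℝ) × ℝ × ℝ) = Fintype.card V + 2 := by
    rw [Module.finrank_prod, Module.finrank_prod, Module.finrank_pi, Module.finrank_self]
  have hrk := LinearMap.finrank_range_add_finrank_ker (Lsum V)
  rw [hrange, finrank_top, Module.finrank_self, hEfin] at hrk
  have hker : Module.finrank ℝ (LinearMap.ker (Lsum V)) = Fintype.card V + 1 := by omega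
  have hli := (affineIndependent_iff_linearIndependent_vsub ℝ z i0).mp hai
  have hmem : ∀ i : {x // x ≠ i0}, z (i : ι) -ᵥ z i0 ∈ LinearMap.ker (Lsum V) := by
    intro i
    rw [LinearMap.mem_ker]
    have : z (i : ι) -ᵥ z i0 = z (i : ι) - z i0 := rfl
    rw [this, map_sub]
    show (∑ q, (z (i : ι)).1 q) - ∑ q, (z i0).1 q = 0
    rw [hz, hz]; ring
  have hg : LinearIndependent ℝ (fun i : {x // x ≠ i0} =>
      (⟨z (i : ι) -ᵥ z i0, hmem i⟩ : LinearMap.ker (Lsum V))) := by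
    apply LinearIndependent.of_comp (LinearMap.ker (Lsum V)).subtype
    exact hli
  have hcard := hg.fintype_card_le_finrank
  rw [hker] at hcard
  have hsub : Fintype.card {x // x ≠ i0} = Fintype.card ι - 1 := by
    simp [Fintype.card_subtype_compl]
  have hpos : 0 < Fintype.card ι := @Fintype.card_pos _ _ ⟨i0⟩
  omega


lemma markov_decomp {X U Y : Type*} [Fintype X] [Fintype U] [Fintype Y] [Nonempty X] [Nonempty Y]
    (P : X × U × Y → ℝ) (hP : IsPMF P) (hmc : IsMarkov P) :
    ∃ (pu : U → ℝ) (al : U → X → ℝ) (be : U → Y → ℝ),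
      (∀ u, 0 ≤ pu u) ∧ (∑ u, pu u = 1) ∧ (∀ u, IsPMF (al u)) ∧ (∀ u, IsPMF (be u)) ∧
      (∀ x u y, P (x, u, y) = pu u * (al u x * be u y)) := by
  classical
  have hPnn := hP.1
  have hXne : (Fintype.card X : ℝ) ≠ 0 := by exact_mod_cast Fintype.card_ne_zero
  have hYne : (Fintype.card Y : ℝ) ≠ 0 := by exact_mod_cast Fintype.card_ne_zero
  have hpusum : ∑ u, ∑ x, ∑ y, P (x, u, y) = 1 := by
    rw [← hP.2, Fintype.sum_prod_type, Finset.sum_comm]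
    apply Finset.sum_congr rfl
    intro x _
    rw [Fintype.sum_prod_type]
  have hrow_nn : ∀ (x : X) (u : U), 0 ≤ ∑ y, P (x, u, y) :=
    fun x u => Finset.sum_nonneg fun y _ => hPnn _
  have hcol_nn : ∀ (u : U) (y : Y), 0 ≤ ∑ x, P (x, u, y) :=
    fun u y => Finset.sum_nonneg fun x _ => hPnn _
  have hpunn : ∀ u, 0 ≤ ∑ x, ∑ y, P (x, u, y) :=
    fun u => Finset.sum_nonneg fun x _ => hrow_nn x u
  have hPle : ∀ x u y, P (x, u, y) ≤ ∑ x', ∑ y', P (x', u, y') := by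
    intro x u y
    calc P (x, u, y) ≤ ∑ y', P (x, u, y') :=
          Finset.single_le_sum (f := fun y' => P (x, u, y')) (fun y' _ => hPnn _)
            (Finset.mem_univ y)
      _ ≤ ∑ x', ∑ y', P (x', u, y') :=
          Finset.single_le_sum (fun x' _ => hrow_nn x' u) (Finset.mem_univ x)
  refine ⟨fun u => ∑ x, ∑ y, P (x, u, y),
    fun u x => if (∑ x', ∑ y', P (x', u, y')) = 0 then (Fintype.card X : ℝ)⁻¹
      else (∑ y', P (x, u, y')) / (∑ x', ∑ y', P (x', u, y')),
    fun u y => if (∑ x', ∑ y', P (x', u, y')) = 0 then (Fintype.card Y : ℝ)⁻¹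
      else (∑ x', P (x', u, y)) / (∑ x', ∑ y', P (x', u, y')),
    hpunn, hpusum, ?_, ?_, ?_⟩
  · intro u
    constructor
    · intro x
      dsimp only
      by_cases h : (∑ x', ∑ y', P (x', u, y')) = 0
      · rw [if_pos h]
        positivity
      · rw [if_neg h]
        exact div_nonneg (hrow_nn x u) (hpunn u)
    · dsimp only
      by_cases h : (∑ x', ∑ y', P (x', u, y')) = 0
      · simp only [if_pos h]
        rw [Finset.sum_const, Finset.card_univ, nsmul_eq_mul, mul_inv_cancel₀ hXne]
      · simp only [if_neg h]
        rw [← Finset.sum_div, div_eq_one_iff_eq h]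
  · intro u
    constructor
    · intro y
      dsimp only
      by_cases h : (∑ x', ∑ y', P (x', u, y')) = 0
      · rw [if_pos h]
        positivity
      · rw [if_neg h]
        exact div_nonneg (hcol_nn u y) (hpunn u)
    · dsimp only
      by_cases h : (∑ x', ∑ y', P (x', u, y')) = 0
      · simp only [if_pos h]
        rw [Finset.sum_const, Finset.card_univ, nsmul_eq_mul, mul_inv_cancel₀ hYne]
      · simp only [if_neg h]
        rw [← Finset.sum_div, div_eq_one_iff_eq h, Finset.sum_comm]
  · intro x u y
    dsimp only
    by_cases h : (∑ x', ∑ y', P (x', u, y')) = 0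
    · simp only [if_pos h, h, zero_mul]
      exact le_antisymm (h ▸ hPle x u y) (hPnn _)
    · simp only [if_neg h]
      have hm := hmc x u y
      field_simp
      linear_combination hm


lemma collapse_y {J Y : Type*} [Fintype J] [Fintype Y] (cc t : J → ℝ) (B : J → Y → ℝ)
    (hB : ∀ j, ∑ y, B j y = 1) :
    ∑ y, ∑ j, cc j * (t j * B j y) = ∑ j, cc j * t j := by
  rw [Finset.sum_comm]
  apply Finset.sum_congr rfl
  intro j _
  rw [← Finset.mul_sum, ← Finset.mul_sum, hB j, mul_one]

theorem strong_coordination_cardinality_bound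
    {X Y U : Type*} [Fintype X] [Fintype Y] [Fintype U]
    (Q : X × Y → ℝ) (hQ : IsPMF Q)
    (P : X × U × Y → ℝ) (hP : IsPMF P)
    (hmarg : ∀ x y, (∑ u, P (x, u, y)) = Q (x, y))
    (hmc : IsMarkov P) :
    ∃ m : ℕ, m ≤ Fintype.card X * Fintype.card Y + 2 ∧
      ∃ P' : X × Fin m × Y → ℝ, IsPMF P' ∧
        (∀ x y, (∑ u, P' (x, u, y)) = Q (x, y)) ∧ IsMarkov P' ∧
        IXU P' ≤ IXU P ∧ IXYU P' ≤ IXYU P ∧ HYgU P' ≤ HYgU P := by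
  classical
  rcases isEmpty_or_nonempty X with hX | hX
  · exfalso
    haveI := hX
    have h := hP.2
    rw [Finset.univ_eq_empty, Finset.sum_empty] at h
    norm_num at h
  rcases isEmpty_or_nonempty Y with hY | hY
  · exfalso
    haveI := hY
    have h := hP.2
    rw [Finset.univ_eq_empty, Finset.sum_empty] at h
    norm_num at h
  haveI := hX
  haveI := hY
  obtain ⟨pu, al, be, hpunn, hpuone, halp, hbep, hdec⟩ := markov_decomp P hP hmc
  have hPeq : P = fun q : X × U × Y => pu q.2.1 * (al q.2.1 q.1 * be q.2.1 q.2.2) := by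
    funext q
    obtain ⟨x, u, y⟩ := q
    exact hdec x u y
  have hv : (∑ u, pu u • (((fun q : X × Y => al u q.1 * be u q.2) : X × Y → ℝ),
        negent (al u), negent (be u)))
      ∈ convexHull ℝ {e : (X × Y → ℝ) × ℝ × ℝ | ∃ a b, IsPMF a ∧ IsPMF b ∧
        e = (fun q => a q.1 * b q.2, negent a, negent b)} := by
    apply Convex.sum_mem (convex_convexHull ℝ _) (fun u _ => hpunn u) hpuone
    intro u _
    exact subset_convexHull ℝ _ ⟨al u, be u, halp u, hbep u, rfl⟩
  obtain ⟨ι, hfin, z, c, hzS, hai, hcpos, hcsum, hvz⟩ :=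
    eq_pos_convex_span_of_mem_convexHull hv
  have hmem : ∀ i : ι, ∃ a b, IsPMF a ∧ IsPMF b ∧
      z i = (fun q : X × Y => a q.1 * b q.2, negent a, negent b) := fun i =>
    hzS (Set.mem_range_self i)
  choose aa bb haa hbb hzz using hmem
  have hcard : Fintype.card ι ≤ Fintype.card X * Fintype.card Y + 2 := by
    have h := card_bound z (fun i => by rw [hzz i]; exact sum_prod_pmf (haa i).2 (hbb i).2) hai
    rwa [Fintype.card_prod] at h
  have key : ∀ (L : ((X × Y → ℝ) × ℝ × ℝ) →ₗ[ℝ] ℝ),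
      ∑ i, c i * L (z i) =
        ∑ u, pu u * L (((fun q : X × Y => al u q.1 * be u q.2) : X × Y → ℝ),
          negent (al u), negent (be u)) := by
    intro L
    have h := congrArg L hvz
    rw [map_sum, map_sum] at h
    simp only [map_smul, smul_eq_mul] at h
    exact h
  have comp2 : ∑ i, c i * negent (aa i) = ∑ u, pu u * negent (al u) := by
    have h := key ((LinearMap.fst ℝ ℝ ℝ).comp (LinearMap.snd ℝ (X × Y → ℝ) (ℝ × ℝ)))
    simpa [hzz] using h
  have comp3 : ∑ i, c i * negent (bb i) = ∑ u, pu u * negent (be u) := by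
    have h := key ((LinearMap.snd ℝ ℝ ℝ).comp (LinearMap.snd ℝ (X × Y → ℝ) (ℝ × ℝ)))
    simpa [hzz] using h
  have comp1 : ∀ x y, ∑ i, c i * (aa i x * bb i y) = ∑ u, pu u * (al u x * be u y) := by
    intro x y
    have h := key ((LinearMap.proj ((x, y) : X × Y)).comp
      (LinearMap.fst ℝ (X × Y → ℝ) (ℝ × ℝ)))
    simpa [hzz] using h
  have hQeq : ∀ x y, ∑ u, pu u * (al u x * be u y) = Q (x, y) := by
    intro x y
    rw [← hmarg x y]
    exact Finset.sum_congr rfl fun u _ => (hdec x u y).symm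
  have hMx : ∀ x, (∑ i, c i * aa i x) = ∑ u, pu u * al u x := by
    intro x
    calc ∑ i, c i * aa i x
        = ∑ y, ∑ i, c i * (aa i x * bb i y) :=
          (collapse_y c (fun i => aa i x) bb (fun i => (hbb i).2)).symm
      _ = ∑ y, ∑ u, pu u * (al u x * be u y) :=
          Finset.sum_congr rfl fun y _ => comp1 x y
      _ = ∑ u, pu u * al u x :=
          collapse_y pu (fun u => al u x) be (fun u => (hbep u).2)
  obtain ⟨eqv⟩ : Nonempty (Fin (Fintype.card ι) ≃ ι) := ⟨(Fintype.equivFin ι).symm⟩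
  have hw' : ∀ j, 0 ≤ c (eqv j) := fun j => (hcpos _).le
  have ha' : ∀ j, IsPMF (aa (eqv j)) := fun j => haa _
  have hb' : ∀ j, IsPMF (bb (eqv j)) := fun j => hbb _
  refine ⟨Fintype.card ι, hcard,
    fun q : X × Fin (Fintype.card ι) × Y =>
      c (eqv q.2.1) * (aa (eqv q.2.1) q.1 * bb (eqv q.2.1) q.2.2),
    ⟨fun q => mul_nonneg (hw' _) (mul_nonneg ((ha' _).1 _) ((hb' _).1 _)), ?_⟩,
    ?_, pf_markov _ _ _ hw' ha' hb', ?_, ?_, ?_⟩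
  · -- total sum
    have htot := pf_total (fun j => c (eqv j)) (fun j => aa (eqv j)) (fun j => bb (eqv j))
      hw' ha' hb'
    refine htot.trans ?_
    rw [Equiv.sum_comp eqv c]
    exact hcsum
  · -- marginal
    intro x y
    have h : (∑ j, c (eqv j) * (aa (eqv j) x * bb (eqv j) y)) =
        ∑ i, c i * (aa i x * bb i y) :=
      Equiv.sum_comp eqv (fun i => c i * (aa i x * bb i y))
    rw [h, comp1 x y, hQeq x y]
  · -- IXU
    have h1 : IXU (fun q : X × Fin (Fintype.card ι) × Y =>
          c (eqv q.2.1) * (aa (eqv q.2.1) q.1 * bb (eqv q.2.1) q.2.2)) =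
        (∑ j, c (eqv j) * negent (aa (eqv j))) -
          negent (fun x => ∑ j, c (eqv j) * aa (eqv j) x) :=
      pf_IXU (fun j => c (eqv j)) (fun j => aa (eqv j)) (fun j => bb (eqv j)) hw' ha' hb'
    have h2 : IXU P = (∑ u, pu u * negent (al u)) -
        negent (fun x => ∑ u, pu u * al u x) := by
      rw [hPeq]
      exact pf_IXU pu al be hpunn halp hbep
    rw [h1, h2]
    apply le_of_eq
    congr 1
    · rw [Equiv.sum_comp eqv (fun i => c i * negent (aa i))]
      exact comp2
    · congr 1
      funext x
      rw [Equiv.sum_comp eqv (fun i => c i * aa i x)]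
      exact hMx x
  · -- IXYU
    have h1 : IXYU (fun q : X × Fin (Fintype.card ι) × Y =>
          c (eqv q.2.1) * (aa (eqv q.2.1) q.1 * bb (eqv q.2.1) q.2.2)) =
        (∑ j, c (eqv j) * (negent (aa (eqv j)) + negent (bb (eqv j)))) -
          negent (fun q : X × Y => ∑ j, c (eqv j) * (aa (eqv j) q.1 * bb (eqv j) q.2)) :=
      pf_IXYU (fun j => c (eqv j)) (fun j => aa (eqv j)) (fun j => bb (eqv j)) hw' ha' hb'
    have h2 : IXYU P = (∑ u, pu u * (negent (al u) + negent (be u))) -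
        negent (fun q : X × Y => ∑ u, pu u * (al u q.1 * be u q.2)) := by
      rw [hPeq]
      exact pf_IXYU pu al be hpunn halp hbep
    rw [h1, h2]
    apply le_of_eq
    congr 1
    · rw [Equiv.sum_comp eqv (fun i => c i * (negent (aa i) + negent (bb i)))]
      simp only [mul_add, Finset.sum_add_distrib, comp2, comp3]
    · congr 1
      funext q
      rw [Equiv.sum_comp eqv (fun i => c i * (aa i q.1 * bb i q.2))]
      exact comp1 q.1 q.2
  · -- HYgU
    have h1 : HYgU (fun q : X × Fin (Fintype.card ι) × Y =>
          c (eqv q.2.1) * (aa (eqv q.2.1) q.1 * bb (eqv q.2.1) q.2.2)) =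
        -∑ j, c (eqv j) * negent (bb (eqv j)) :=
      pf_HYgU (fun j => c (eqv j)) (fun j => aa (eqv j)) (fun j => bb (eqv j)) hw' ha' hb'
    have h2 : HYgU P = -∑ u, pu u * negent (be u) := by
      rw [hPeq]
      exact pf_HYgU pu al be hpunn halp hbep
    rw [h1, h2]
    apply le_of_eq
    congr 1
    rw [Equiv.sum_comp eqv (fun i => c i * negent (bb i))]
    exact comp3
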